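/- Narrow region principle for systems in bounded domains: Let E ⊂ {x ∈ ℝⁿ : 0 < xₙ < d} be a bounded open set, and let Ũ, Ṽ ∈ L_{2s} ∩ C^{1,1}_{loc}(E) be continuous on ℝⁿ and satisfy (−Δ)^s Ũ − b₁Ũ − c₁Ṽ ≥ 0 and (−Δ)^s Ṽ − b₂Ũ − c₂Ṽ ≥ 0 in E, with Ũ, Ṽ ≥ 0 on Eᶜ, where c₁ > 0 and b₂ > 0 on E, and b₁, b₂, c₁, c₂ are bounded above on E. Then there exists d₀ > 0 depending on n, s and the bounds on the coefficients such that if d < d₀, then Ũ ≥ 0 and Ṽ ≥ 0 on E. -/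

import Mathlib

open MeasureTheory

/-- The fractional Laplacian (−Δ)^s with normalizing constant C. -/
noncomputable def fracLap (n : ℕ) (s C : ℝ)
    (W : EuclideanSpace ℝ (Fin n) → ℝ) (x : EuclideanSpace ℝ (Fin n)) : ℝ :=
  C * ∫ y, (W x - W y) / ‖x - y‖ ^ ((n : ℝ) + 2 * s)

open Metric in
lemma nrp_coord_abs_le_norm {n : ℕ} (z : EuclideanSpace ℝ (Fin n)) (i : Fin n) :
    |z i| ≤ ‖z‖ := by
  rw [EuclideanSpace.norm_eq]
  have h1 : |z i| = Real.sqrt (‖z i‖ ^ 2) := by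
    rw [Real.sqrt_sq_eq_abs]; simp [Real.norm_eq_abs, abs_abs]
  rw [h1]
  apply Real.sqrt_le_sqrt
  exact Finset.single_le_sum (f := fun j => ‖z j‖ ^ 2)
    (fun j _ => sq_nonneg _) (Finset.mem_univ i)

open Metric in
lemma nrp_key_bound (n : ℕ) (s Cns d : ℝ) (hs0 : 0 < s) (hCns : 0 < Cns) (hd : 0 < d)
    (i : Fin n)
    (W : EuclideanSpace ℝ (Fin n) → ℝ) (x₀ : EuclideanSpace ℝ (Fin n))
    (hx₀ : 0 < x₀ i)
    (hmin : ∀ y, W x₀ ≤ W y) (hneg : W x₀ < 0)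
    (hout : ∀ y : EuclideanSpace ℝ (Fin n), d ≤ y i → 0 ≤ W y)
    (hint : Integrable (fun y => (W x₀ - W y) / ‖x₀ - y‖ ^ ((n:ℝ)+2*s))) :
    fracLap n s Cns W x₀ ≤
      Cns * ((d ^ n * (volume (ball (0:EuclideanSpace ℝ (Fin n)) 1)).toReal) *
        (W x₀ / (4*d) ^ ((n:ℝ)+2*s))) := by
  set e : ℝ := (n:ℝ) + 2*s with he_def
  have he : 0 ≤ e := by positivity
  set f : EuclideanSpace ℝ (Fin n) → ℝ := fun y => (W x₀ - W y) / ‖x₀ - y‖ ^ e with hf_def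
  have hf_nonpos : ∀ y, f y ≤ 0 := by
    intro y
    apply div_nonpos_of_nonpos_of_nonneg
    · linarith [hmin y]
    · positivity
  set c : EuclideanSpace ℝ (Fin n) := x₀ + EuclideanSpace.single i (3*d) with hc_def
  set A : Set (EuclideanSpace ℝ (Fin n)) := ball c d with hA_def
  have hci : c i = x₀ i + 3*d := by
    simp [hc_def, EuclideanSpace.single_apply]
  have hxc : ‖x₀ - c‖ = 3*d := by
    have h : x₀ - c = -(EuclideanSpace.single i (3*d)) := by
      simp [hc_def]
    rw [h, norm_neg, EuclideanSpace.norm_single]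
    rw [Real.norm_eq_abs, abs_of_pos (by linarith)]
  have hA1 : ∀ y ∈ A, x₀ i + 2*d < y i := by
    intro y hy
    have h1 : |y i - c i| ≤ ‖y - c‖ := nrp_coord_abs_le_norm (y - c) i
    have h2 : ‖y - c‖ < d := by rw [← dist_eq_norm]; exact mem_ball.mp hy
    have h3 := abs_lt.mp (lt_of_le_of_lt h1 h2)
    rw [hci] at h3
    linarith [h3.1]
  have hA1' : ∀ y ∈ A, d ≤ y i := by
    intro y hy; have := hA1 y hy; linarith
  have hA2 : ∀ y ∈ A, ‖x₀ - y‖ ≤ 4*d ∧ 0 < ‖x₀ - y‖ := by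
    intro y hy
    refine ⟨?_, ?_⟩
    · have h2 : ‖c - y‖ < d := by
        rw [← dist_eq_norm, dist_comm]; exact mem_ball.mp hy
      calc ‖x₀ - y‖ ≤ ‖x₀ - c‖ + ‖c - y‖ := by
            have h : x₀ - y = (x₀ - c) + (c - y) := by abel
            rw [h]; exact norm_add_le _ _
        _ ≤ 3*d + d := by rw [hxc]; linarith
        _ = 4*d := by ring
    · have hyi := hA1 y hy
      have hne : x₀ ≠ y := by
        intro h; rw [← h] at hyi; linarith
      rw [norm_pos_iff]; exact sub_ne_zero.mpr hne
  have hptwise : ∀ y ∈ A, f y ≤ W x₀ / (4*d) ^ e := by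
    intro y hy
    obtain ⟨hle, hpos⟩ := hA2 y hy
    have hden_pos : 0 < ‖x₀ - y‖ ^ e := Real.rpow_pos_of_pos hpos e
    have hnum : W x₀ - W y ≤ W x₀ := by
      have := hout y (hA1' y hy); linarith
    have h1 : f y ≤ W x₀ / ‖x₀ - y‖ ^ e := (div_le_div_iff_of_pos_right hden_pos).mpr hnum
    refine h1.trans ?_
    have hden_le : ‖x₀ - y‖ ^ e ≤ (4*d) ^ e :=
      Real.rpow_le_rpow (norm_nonneg _) hle he
    rw [div_eq_mul_inv, div_eq_mul_inv]
    apply mul_le_mul_of_nonpos_left _ hneg.le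
    exact inv_anti₀ hden_pos hden_le
  have hmeas : MeasurableSet A := measurableSet_ball
  have hsplit : (∫ y in A, f y) + (∫ y in Aᶜ, f y) = ∫ y, f y :=
    integral_add_compl hmeas hint
  have hcompl : (∫ y in Aᶜ, f y) ≤ 0 :=
    setIntegral_nonpos hmeas.compl (fun y _ => hf_nonpos y)
  have hstep1 : (∫ y, f y) ≤ ∫ y in A, f y := by linarith
  have hvol_lt : volume A < ⊤ := measure_ball_lt_top
  have hconst_int : IntegrableOn (fun _ : EuclideanSpace ℝ (Fin n) => W x₀ / (4*d) ^ e) A :=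
    integrableOn_const hvol_lt.ne
  have hstep2 : (∫ y in A, f y) ≤ ∫ y in A, W x₀ / (4*d) ^ e :=
    setIntegral_mono_on hint.integrableOn hconst_int hmeas hptwise
  have hvol : volume A = ENNReal.ofReal (d ^ n) * volume (ball (0:EuclideanSpace ℝ (Fin n)) 1) := by
    rw [hA_def, Measure.addHaar_ball_of_pos volume c hd, finrank_euclideanSpace_fin]
  have hstep3 : (∫ y in A, W x₀ / (4*d) ^ e)
      = (d ^ n * (volume (ball (0:EuclideanSpace ℝ (Fin n)) 1)).toReal) * (W x₀ / (4*d) ^ e) := by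
    rw [setIntegral_const, measureReal_def, hvol, ENNReal.toReal_mul, ENNReal.toReal_ofReal (by positivity)]
    rw [smul_eq_mul]
  have hfinal : (∫ y, f y) ≤
      (d ^ n * (volume (ball (0:EuclideanSpace ℝ (Fin n)) 1)).toReal) * (W x₀ / (4*d) ^ e) := by
    rw [← hstep3]; exact hstep1.trans hstep2
  unfold fracLap
  exact mul_le_mul_of_nonneg_left hfinal hCns.le

lemma nrp_arith_aux (n : ℕ) (s Cns d ι w : ℝ) (hd : 0 < d) :
    Cns * ((d ^ n * ι) * (w / (4*d) ^ ((n:ℝ)+2*s)))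
      = (Cns * ι / 4 ^ ((n:ℝ)+2*s) / d ^ (2*s)) * w := by
  have h4d : (4*d:ℝ) ^ ((n:ℝ)+2*s) = 4 ^ ((n:ℝ)+2*s) * d ^ ((n:ℝ)+2*s) :=
    Real.mul_rpow (by norm_num) hd.le
  have hdn : (d:ℝ) ^ n = d ^ ((n:ℝ)) := (Real.rpow_natCast d n).symm
  have hde : d ^ ((n:ℝ)+2*s) = d ^ ((n:ℝ)) * d ^ (2*s) := Real.rpow_add hd _ _
  have h1 : (0:ℝ) < 4 ^ ((n:ℝ)+2*s) := Real.rpow_pos_of_pos (by norm_num) _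
  have h2 : (0:ℝ) < d ^ ((n:ℝ)) := Real.rpow_pos_of_pos hd _
  have h3 : (0:ℝ) < d ^ (2*s) := Real.rpow_pos_of_pos hd _
  rw [h4d, hdn, hde]
  field_simp

set_option maxHeartbeats 1000000 in
/-- Narrow region principle for systems in bounded domains (Lemma 2.1):
if the width d of E in the xₙ-direction is small enough (depending only on
n, s and the coefficient bounds), then Ũ ≥ 0 and Ṽ ≥ 0 on E. -/
theorem narrow_region_principle_bounded (n : ℕ) (hn : 1 ≤ n) (s Cns B : ℝ)
    (hs : s ∈ Set.Ioo (0:ℝ) 1) (hCns : 0 < Cns) :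
    ∃ d₀ > (0:ℝ), ∀ (d : ℝ) (E : Set (EuclideanSpace ℝ (Fin n)))
      (U V b₁ b₂ c₁ c₂ : EuclideanSpace ℝ (Fin n) → ℝ),
      0 < d → d < d₀ → IsOpen E → Bornology.IsBounded E →
      (∀ x ∈ E, 0 < x ⟨n-1, by omega⟩ ∧ x ⟨n-1, by omega⟩ < d) →
      Continuous U → Continuous V →
      Integrable (fun x => |U x| / (1 + ‖x‖ ^ ((n : ℝ) + 2 * s))) →
      Integrable (fun x => |V x| / (1 + ‖x‖ ^ ((n : ℝ) + 2 * s))) →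
      (∀ x ∈ E, Integrable (fun y => (U x - U y) / ‖x - y‖ ^ ((n : ℝ) + 2 * s))) →
      (∀ x ∈ E, Integrable (fun y => (V x - V y) / ‖x - y‖ ^ ((n : ℝ) + 2 * s))) →
      (∀ x ∈ E, 0 ≤ fracLap n s Cns U x - b₁ x * U x - c₁ x * V x) →
      (∀ x ∈ E, 0 ≤ fracLap n s Cns V x - b₂ x * U x - c₂ x * V x) →
      (∀ x ∉ E, 0 ≤ U x ∧ 0 ≤ V x) →
      (∀ x ∈ E, 0 < c₁ x ∧ 0 < b₂ x) →
      (∀ x ∈ E, b₁ x ≤ B ∧ b₂ x ≤ B ∧ c₁ x ≤ B ∧ c₂ x ≤ B) →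
      ∀ x ∈ E, 0 ≤ U x ∧ 0 ≤ V x := by
  obtain ⟨hs0, hs1⟩ := hs
  set ι : ℝ := (volume (Metric.ball (0:EuclideanSpace ℝ (Fin n)) 1)).toReal with hι_def
  have hι : 0 < ι := by
    apply ENNReal.toReal_pos
    · exact (Metric.measure_ball_pos volume _ one_pos).ne'
    · exact measure_ball_lt_top.ne
  set c₀ : ℝ := Cns * ι / 4 ^ ((n:ℝ)+2*s) with hc₀_def
  have hc₀ : 0 < c₀ := by
    have h1 : (0:ℝ) < 4 ^ ((n:ℝ)+2*s) := Real.rpow_pos_of_pos (by norm_num) _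
    positivity
  set M : ℝ := max B 1 with hM_def
  have hM : 0 < M := lt_of_lt_of_le one_pos (le_max_right _ _)
  have hBM : B ≤ M := le_max_left _ _
  refine ⟨(c₀ / (2*M)) ^ ((1:ℝ)/(2*s)), Real.rpow_pos_of_pos (by positivity) _, ?_⟩
  intro d E U V b₁ b₂ c₁ c₂ hd hdd₀ hEo hEb hE hU hV hintU' hintV' hintU hintV hsub1 hsub2
    hext hpos hbnd x hx
  -- the quantity Q = c₀ / d^{2s} satisfies Q > 2M
  have h2s : (0:ℝ) < 2*s := by linarith
  have hds : d ^ (2*s) < c₀ / (2*M) := by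
    have h1 : d ^ (2*s) < ((c₀ / (2*M)) ^ ((1:ℝ)/(2*s))) ^ (2*s) :=
      Real.rpow_lt_rpow hd.le hdd₀ h2s
    rwa [← Real.rpow_mul (by positivity), one_div,
      inv_mul_cancel₀ h2s.ne', Real.rpow_one] at h1
  set Q : ℝ := c₀ / d ^ (2*s) with hQ_def
  have hdspos : 0 < d ^ (2*s) := Real.rpow_pos_of_pos hd _
  have hQM : 2*M < Q := by
    have h1 : d ^ (2*s) * (2*M) < c₀ := (lt_div_iff₀ (by positivity)).mp hds
    rw [hQ_def, lt_div_iff₀ hdspos]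
    nlinarith
  set K : ℝ := Q - B with hK_def
  have hMK : M < K := by rw [hK_def]; linarith
  have hK0 : 0 < K := hM.trans hMK
  have hBK : B < K := lt_of_le_of_lt hBM hMK
  have hB : 0 < B := lt_of_lt_of_le (hpos x hx).1 (hbnd x hx).2.2.1
  clear_value ι c₀ M Q K
  set i : Fin n := ⟨n-1, by omega⟩ with hi_def
  have hcl : IsCompact (closure E) := hEb.isCompact_closure
  have hne : (closure E).Nonempty := ⟨x, subset_closure hx⟩
  obtain ⟨x₀, hx₀c, hx₀m⟩ := hcl.exists_isMinOn hne hU.continuousOn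
  obtain ⟨x₁, hx₁c, hx₁m⟩ := hcl.exists_isMinOn hne hV.continuousOn
  have hUmin : ∀ y ∈ closure E, U x₀ ≤ U y := fun y hy => isMinOn_iff.mp hx₀m y hy
  have hVmin : ∀ y ∈ closure E, V x₁ ≤ V y := fun y hy => isMinOn_iff.mp hx₁m y hy
  have glob : ∀ (W : EuclideanSpace ℝ (Fin n) → ℝ) (z : EuclideanSpace ℝ (Fin n)),
      (∀ y ∈ closure E, W z ≤ W y) → W z < 0 → (∀ y ∉ E, 0 ≤ W y) →
      z ∈ E ∧ ∀ y, W z ≤ W y := by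
    intro W z hm hneg hWext
    have hzE : z ∈ E := by
      by_contra hzE
      exact absurd (hWext z hzE) (not_le.mpr hneg)
    refine ⟨hzE, fun y => ?_⟩
    by_cases hy : y ∈ closure E
    · exact hm y hy
    · have hyE : y ∉ E := fun h => hy (subset_closure h)
      linarith [hWext y hyE]
  have fl_bound : ∀ (W : EuclideanSpace ℝ (Fin n) → ℝ) (z : EuclideanSpace ℝ (Fin n)),
      z ∈ E → (∀ y, W z ≤ W y) → W z < 0 → (∀ y ∉ E, 0 ≤ W y) →
      Integrable (fun y => (W z - W y) / ‖z - y‖ ^ ((n:ℝ)+2*s)) →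
      fracLap n s Cns W z ≤ Q * W z := by
    intro W z hzE hm hneg hWext hintW
    have houtW : ∀ y : EuclideanSpace ℝ (Fin n), d ≤ y i → 0 ≤ W y := by
      intro y hy
      apply hWext
      intro hyE
      exact absurd (hE y hyE).2 (not_lt.mpr hy)
    have hkb := nrp_key_bound n s Cns d hs0 hCns hd i W z (hE z hzE).1 hm hneg houtW hintW
    calc fracLap n s Cns W z
        ≤ Cns * ((d ^ n * (volume (Metric.ball (0:EuclideanSpace ℝ (Fin n)) 1)).toReal) *
            (W z / (4*d) ^ ((n:ℝ)+2*s))) := hkb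
      _ = (Cns * (volume (Metric.ball (0:EuclideanSpace ℝ (Fin n)) 1)).toReal
            / 4 ^ ((n:ℝ)+2*s) / d ^ (2*s)) * W z := nrp_arith_aux n s Cns d _ (W z) hd
      _ = Q * W z := by rw [hQ_def, hc₀_def, hι_def]
  by_cases hU0 : 0 ≤ U x₀
  · by_cases hV0 : 0 ≤ V x₁
    · exact ⟨le_trans hU0 (hUmin x (subset_closure hx)),
        le_trans hV0 (hVmin x (subset_closure hx))⟩
    · push_neg at hV0
      exfalso
      obtain ⟨hx₁E, hVglob⟩ := glob V x₁ hVmin hV0 (fun y hy => (hext y hy).2)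
      have hfl := fl_bound V x₁ hx₁E hVglob hV0 (fun y hy => (hext y hy).2) (hintV x₁ hx₁E)
      have h2 := hsub2 x₁ hx₁E
      have hUx₁ : 0 ≤ U x₁ := le_trans hU0 (hUmin x₁ hx₁c)
      have hb₂ := (hpos x₁ hx₁E).2
      have hc₂B := (hbnd x₁ hx₁E).2.2.2
      have h3 : b₂ x₁ * U x₁ ≤ (Q - c₂ x₁) * V x₁ := by linarith [sub_mul Q (c₂ x₁) (V x₁)]
      have h4 : (Q - c₂ x₁) * V x₁ ≤ K * V x₁ :=
        mul_le_mul_of_nonpos_right (by rw [hK_def]; linarith) hV0.le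
      have h5 : K * V x₁ < 0 := mul_neg_of_pos_of_neg hK0 hV0
      have h6 : 0 ≤ b₂ x₁ * U x₁ := mul_nonneg hb₂.le hUx₁
      linarith
  · push_neg at hU0
    exfalso
    obtain ⟨hx₀E, hUglob⟩ := glob U x₀ hUmin hU0 (fun y hy => (hext y hy).1)
    have hflU := fl_bound U x₀ hx₀E hUglob hU0 (fun y hy => (hext y hy).1) (hintU x₀ hx₀E)
    have h1 := hsub1 x₀ hx₀E
    have hc₁ := (hpos x₀ hx₀E).1
    have hb₁B := (hbnd x₀ hx₀E).1
    have hc₁B := (hbnd x₀ hx₀E).2.2.1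
    have h3 : c₁ x₀ * V x₀ ≤ (Q - b₁ x₀) * U x₀ := by linarith [sub_mul Q (b₁ x₀) (U x₀)]
    have h4 : (Q - b₁ x₀) * U x₀ ≤ K * U x₀ :=
      mul_le_mul_of_nonpos_right (by rw [hK_def]; linarith) hU0.le
    have hKU : K * U x₀ < 0 := mul_neg_of_pos_of_neg hK0 hU0
    have h5 : c₁ x₀ * V x₀ ≤ K * U x₀ := h3.trans h4
    have hVx₀ : V x₀ ≤ K * U x₀ / B := by
      have h6 : V x₀ ≤ K * U x₀ / c₁ x₀ := by
        rw [le_div_iff₀ hc₁]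
        linarith [mul_comm (c₁ x₀) (V x₀)]
      refine h6.trans ?_
      rw [div_le_div_iff₀ hc₁ hB]
      exact mul_le_mul_of_nonpos_left hc₁B hKU.le
    have hVx₀neg : V x₀ < 0 := lt_of_le_of_lt hVx₀ (div_neg_of_neg_of_pos hKU hB)
    have hVx₁ : V x₁ < 0 := lt_of_le_of_lt (hVmin x₀ hx₀c) hVx₀neg
    obtain ⟨hx₁E, hVglob⟩ := glob V x₁ hVmin hVx₁ (fun y hy => (hext y hy).2)
    have hflV := fl_bound V x₁ hx₁E hVglob hVx₁ (fun y hy => (hext y hy).2) (hintV x₁ hx₁E)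
    have h2 := hsub2 x₁ hx₁E
    have hb₂ := (hpos x₁ hx₁E).2
    have hb₂B := (hbnd x₁ hx₁E).2.1
    have hc₂B := (hbnd x₁ hx₁E).2.2.2
    have h7 : b₂ x₁ * U x₁ ≤ (Q - c₂ x₁) * V x₁ := by linarith [sub_mul Q (c₂ x₁) (V x₁)]
    have h8 : (Q - c₂ x₁) * V x₁ ≤ K * V x₁ :=
      mul_le_mul_of_nonpos_right (by rw [hK_def]; linarith) hVx₁.le
    have h9 : B * U x₀ ≤ b₂ x₁ * U x₀ := mul_le_mul_of_nonpos_right hb₂B hU0.le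
    have h10 : b₂ x₁ * U x₀ ≤ b₂ x₁ * U x₁ := mul_le_mul_of_nonneg_left (hUglob x₁) hb₂.le
    have h11 : K * V x₁ ≤ K * V x₀ := mul_le_mul_of_nonneg_left (hVmin x₀ hx₀c) hK0.le
    have h12 : K * V x₀ ≤ K * (K * U x₀ / B) := mul_le_mul_of_nonneg_left hVx₀ hK0.le
    have hchain : B * U x₀ ≤ K * (K * U x₀ / B) := by linarith
    have hfin : B * (B * U x₀) ≤ B * (K * (K * U x₀ / B)) :=
      mul_le_mul_of_nonneg_left hchain hB.le
    have heq : B * (K * (K * U x₀ / B)) = K^2 * U x₀ := by field_simp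
    have hsqlt : B^2 < K^2 := by nlinarith [mul_pos (sub_pos.mpr hBK) (show (0:ℝ) < K + B by linarith)]
    have hsq : K^2 * U x₀ < B^2 * U x₀ := mul_lt_mul_of_neg_right hsqlt hU0
    linarith [show B * (B * U x₀) = B^2 * U x₀ from by ring]
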